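/- Let Σ̂ be an estimator of an N×N symmetric invertible matrix Σ with entries σ̂_{ij} and σ_{ij}, and suppose there exists C₀ > 0 such that sup_{i,j} Pr(|σ̂_{ij} − σ_{ij}| > d) ≤ exp(−C₀ T d²) for all d > 0. Then for any b_T > 0, Pr(‖Σ̂⁻¹ − Σ⁻¹‖_F > b_T) ≤ N² exp[ −C₀ T b_T² / ( N² ‖Σ⁻¹‖₂² (‖Σ⁻¹‖₂ + b_T)² ) ] + N² exp( −C₀ T / ( N² ‖Σ⁻¹‖₂² ) ). -/

import Mathlib

open MeasureTheory Matrix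

/-- Frobenius norm of a real matrix. -/
noncomputable def frobNorm {m n : Type*} [Fintype m] [Fintype n] (A : Matrix m n ℝ) : ℝ :=
  Real.sqrt (∑ i, ∑ j, A i j ^ 2)

/-- Spectral (operator 2-) norm of a real matrix. -/
noncomputable def specNorm {m n : Type*} [Fintype m] [Fintype n] [DecidableEq n]
    (A : Matrix m n ℝ) : ℝ :=
  ‖LinearMap.toContinuousLinearMap (Matrix.toEuclideanLin A)‖

section Aux
open scoped Matrix.Norms.L2Operator
variable {N : ℕ}

lemma frobNorm_nonneg {m n : Type*} [Fintype m] [Fintype n] (A : Matrix m n ℝ) :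
    0 ≤ frobNorm A := Real.sqrt_nonneg _

lemma frobNorm_sq {m n : Type*} [Fintype m] [Fintype n] (A : Matrix m n ℝ) :
    frobNorm A ^ 2 = ∑ i, ∑ j, A i j ^ 2 :=
  Real.sq_sqrt (by positivity)

lemma specNorm_eq (A : Matrix (Fin N) (Fin N) ℝ) : specNorm A = ‖A‖ := rfl

lemma norm_mulVec_le (A : Matrix (Fin N) (Fin N) ℝ) (x : EuclideanSpace ℝ (Fin N)) :
    ‖((WithLp.equiv 2 _).symm (A *ᵥ (WithLp.equiv 2 _) x) : EuclideanSpace ℝ (Fin N))‖ ≤ ‖A‖ * ‖x‖ := by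
  exact A.l2_opNorm_mulVec x

end Aux

section Aux2
open scoped Matrix.Norms.L2Operator
variable {N : ℕ}

lemma euc_norm_sq (y : EuclideanSpace ℝ (Fin N)) : ‖y‖ ^ 2 = ∑ i, y i ^ 2 := by
  rw [EuclideanSpace.norm_eq, Real.sq_sqrt (by positivity)]
  simp [sq_abs]

lemma spec_le_frob (A : Matrix (Fin N) (Fin N) ℝ) : ‖A‖ ≤ frobNorm A := by
  rw [Matrix.l2_opNorm_def]
  apply ContinuousLinearMap.opNorm_le_bound _ (frobNorm_nonneg A)
  intro x
  have hval : (LinearEquiv.trans (Matrix.toEuclideanLin) (LinearMap.toContinuousLinearMap) A) x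
      = ((WithLp.equiv 2 _).symm (A *ᵥ (WithLp.equiv 2 _) x) : EuclideanSpace ℝ (Fin N)) := rfl
  rw [hval]
  have hsq : ‖((WithLp.equiv 2 _).symm (A *ᵥ (WithLp.equiv 2 _) x) : EuclideanSpace ℝ (Fin N))‖ ^ 2
      ≤ (frobNorm A * ‖x‖) ^ 2 := by
    rw [euc_norm_sq]
    have : ∀ i, ((A *ᵥ (WithLp.equiv 2 _) x) i) ^ 2 ≤ (∑ j, A i j ^ 2) * (∑ j, (x j) ^ 2) := by
      intro i
      have h := Finset.sum_mul_sq_le_sq_mul_sq Finset.univ (fun j => A i j) (fun j => x j)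
      simpa [Matrix.mulVec, dotProduct] using h
    calc ∑ i, ((WithLp.equiv 2 _).symm (A *ᵥ (WithLp.equiv 2 _) x) : EuclideanSpace ℝ (Fin N)) i ^ 2
        ≤ ∑ i, (∑ j, A i j ^ 2) * (∑ j, (x j) ^ 2) := by
          apply Finset.sum_le_sum; intro i _; exact this i
      _ = (frobNorm A) ^2 * ‖x‖ ^2 := by rw [frobNorm_sq, euc_norm_sq, Finset.sum_mul]
      _ = (frobNorm A * ‖x‖) ^ 2 := by ring
  have h1 : (0:ℝ) ≤ frobNorm A * ‖x‖ := mul_nonneg (frobNorm_nonneg A) (norm_nonneg x)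
  nlinarith [norm_nonneg ((WithLp.equiv 2 _).symm (A *ᵥ (WithLp.equiv 2 _) x) : EuclideanSpace ℝ (Fin N))]

end Aux2

section Aux3
open scoped Matrix.Norms.L2Operator
variable {N : ℕ}

lemma frob_transpose (A : Matrix (Fin N) (Fin N) ℝ) : frobNorm Aᵀ = frobNorm A := by
  unfold frobNorm
  rw [Finset.sum_comm]
  rfl

lemma frob_neg (A : Matrix (Fin N) (Fin N) ℝ) : frobNorm (-A) = frobNorm A := by
  unfold frobNorm; simp

lemma spec_transpose (A : Matrix (Fin N) (Fin N) ℝ) : ‖Aᵀ‖ = ‖A‖ := by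
  have : Aᵀ = Aᴴ := by
    ext i j; simp [Matrix.conjTranspose_apply]
  rw [this, Matrix.l2_opNorm_conjTranspose]

lemma frob_mul_left (A B : Matrix (Fin N) (Fin N) ℝ) :
    frobNorm (A * B) ≤ ‖A‖ * frobNorm B := by
  have h1 : (0:ℝ) ≤ ‖A‖ * frobNorm B := mul_nonneg (norm_nonneg _) (frobNorm_nonneg B)
  have hsq : frobNorm (A * B) ^ 2 ≤ (‖A‖ * frobNorm B) ^ 2 := by
    rw [frobNorm_sq, Finset.sum_comm]
    have hcol : ∀ j, ∑ i, (A * B) i j ^ 2 ≤ ‖A‖ ^ 2 * ∑ i, B i j ^ 2 := by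
      intro j
      have hx := norm_mulVec_le A ((WithLp.equiv 2 _).symm (fun i => B i j))
      have he1 : ‖((WithLp.equiv 2 _).symm (A *ᵥ (WithLp.equiv 2 _)
          ((WithLp.equiv 2 ((Fin N) → ℝ)).symm (fun i => B i j))) : EuclideanSpace ℝ (Fin N))‖ ^ 2
          = ∑ i, (A * B) i j ^ 2 := by
        rw [euc_norm_sq]
        refine Finset.sum_congr rfl fun i _ => ?_
        simp [Matrix.mulVec, Matrix.mul_apply, dotProduct]
      have he2 : ‖((WithLp.equiv 2 ((Fin N) → ℝ)).symm (fun i => B i j) : EuclideanSpace ℝ (Fin N))‖ ^ 2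
          = ∑ i, B i j ^ 2 := by rw [euc_norm_sq]; rfl
      have := mul_le_mul hx hx (norm_nonneg _) (mul_nonneg (norm_nonneg _) (norm_nonneg _))
      calc ∑ i, (A * B) i j ^ 2 = _ := he1.symm
        _ ≤ (‖A‖ * ‖((WithLp.equiv 2 ((Fin N) → ℝ)).symm (fun i => B i j) : EuclideanSpace ℝ (Fin N))‖) ^ 2 := by
            rw [pow_two, pow_two] at *; nlinarith [norm_nonneg ((WithLp.equiv 2 _).symm (A *ᵥ (WithLp.equiv 2 _) ((WithLp.equiv 2 ((Fin N) → ℝ)).symm (fun i => B i j))) : EuclideanSpace ℝ (Fin N))]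
        _ = ‖A‖ ^ 2 * ∑ i, B i j ^ 2 := by rw [mul_pow, he2]
    calc ∑ j, ∑ i, (A * B) i j ^ 2 ≤ ∑ j, ‖A‖ ^ 2 * ∑ i, B i j ^ 2 :=
          Finset.sum_le_sum (fun j _ => hcol j)
      _ = ‖A‖ ^ 2 * ∑ j, ∑ i, B i j ^ 2 := by rw [Finset.mul_sum]
      _ = ‖A‖ ^ 2 * frobNorm B ^ 2 := by rw [frobNorm_sq, Finset.sum_comm]
      _ = (‖A‖ * frobNorm B) ^ 2 := by ring
  nlinarith [frobNorm_nonneg (A * B)]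

lemma frob_mul_right (A B : Matrix (Fin N) (Fin N) ℝ) :
    frobNorm (A * B) ≤ frobNorm A * ‖B‖ := by
  have := frob_mul_left Bᵀ Aᵀ
  rw [← Matrix.transpose_mul, frob_transpose, frob_transpose, spec_transpose] at this
  linarith

end Aux3

section Aux4
open scoped Matrix.Norms.L2Operator
variable {N : ℕ}

lemma frob_le_entries (E : Matrix (Fin N) (Fin N) ℝ) {d : ℝ} (hd : 0 ≤ d)
    (h : ∀ i j, |E i j| ≤ d) : frobNorm E ≤ N * d := by
  have hNd : (0:ℝ) ≤ N * d := by positivity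
  have hsq : frobNorm E ^ 2 ≤ (N * d) ^ 2 := by
    rw [frobNorm_sq]
    calc ∑ i, ∑ j, E i j ^ 2 ≤ ∑ _i : Fin N, ∑ _j : Fin N, d ^ 2 := by
          apply Finset.sum_le_sum; intro i _
          apply Finset.sum_le_sum; intro j _
          calc E i j ^ 2 = |E i j| ^ 2 := (sq_abs _).symm
            _ ≤ d ^ 2 := by nlinarith [h i j, abs_nonneg (E i j)]
      _ = (N:ℝ) * ((N:ℝ) * d ^ 2) := by simp [Finset.sum_const]
      _ = (N * d) ^ 2 := by ring
  nlinarith [frobNorm_nonneg E]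

lemma isUnit_det_one_add (X : Matrix (Fin N) (Fin N) ℝ) (h : ‖X‖ < 1) :
    IsUnit (1 + X).det := by
  rw [isUnit_iff_ne_zero]
  intro h0
  obtain ⟨v, hv, hmv⟩ := (Matrix.exists_mulVec_eq_zero_iff).mpr h0
  have hXv : X *ᵥ v = -v := by
    have h' := hmv
    rw [Matrix.add_mulVec, Matrix.one_mulVec] at h'
    exact eq_neg_of_add_eq_zero_right h'
  set w : EuclideanSpace ℝ (Fin N) := (WithLp.equiv 2 _).symm v with hw
  have hwne : ‖w‖ ≠ 0 := by
    simp only [norm_ne_zero_iff]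
    intro hz
    apply hv
    have := congrArg (WithLp.equiv 2 ((Fin N) → ℝ)) (hz ▸ hw.symm)
    simpa using this
  have hb := norm_mulVec_le X w
  have he : ((WithLp.equiv 2 _).symm (X *ᵥ (WithLp.equiv 2 _) w) : EuclideanSpace ℝ (Fin N)) = -w := by
    rw [hw]
    simp [hXv]
  rw [he, norm_neg] at hb
  have hwpos : 0 < ‖w‖ := lt_of_le_of_ne (norm_nonneg w) (Ne.symm hwne)
  nlinarith [norm_nonneg X]

lemma key_det (S E : Matrix (Fin N) (Fin N) ℝ) (hS : IsUnit S.det)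
    (h : ‖S⁻¹‖ * frobNorm E < 1) : IsUnit (S + E).det := by
  have hX : ‖S⁻¹ * E‖ ≤ ‖S⁻¹‖ * frobNorm E :=
    le_trans (Matrix.l2_opNorm_mul _ _)
      (mul_le_mul_of_nonneg_left (spec_le_frob E) (norm_nonneg _))
  have hU1 : IsUnit (1 + S⁻¹ * E).det := isUnit_det_one_add _ (lt_of_le_of_lt hX h)
  have hfact : S + E = S * (1 + S⁻¹ * E) := by
    rw [mul_add, mul_one, ← Matrix.mul_assoc, Matrix.mul_nonsing_inv S hS, Matrix.one_mul]
  rw [hfact, Matrix.det_mul]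
  exact hS.mul hU1

lemma key_bound (S E : Matrix (Fin N) (Fin N) ℝ) (hS : IsUnit S.det)
    (h : ‖S⁻¹‖ * frobNorm E < 1) :
    frobNorm ((S + E)⁻¹ - S⁻¹) ≤
      ‖S⁻¹‖ ^ 2 * frobNorm E / (1 - ‖S⁻¹‖ * frobNorm E) := by
  set K := ‖S⁻¹‖ with hK
  set f := frobNorm E with hf
  have hK0 : 0 ≤ K := norm_nonneg _
  have hf0 : 0 ≤ f := frobNorm_nonneg E
  have hdet : IsUnit (S + E).det := key_det S E hS h
  set T := S + E with hT
  have hTT : T⁻¹ * T = 1 := Matrix.nonsing_inv_mul T hdet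
  have hSS : S * S⁻¹ = 1 := Matrix.mul_nonsing_inv S hS
  have hiden : T⁻¹ - S⁻¹ = -(T⁻¹ * E * S⁻¹) := by
    have h1 : T⁻¹ - S⁻¹ = T⁻¹ * (S * S⁻¹) - (T⁻¹ * T) * S⁻¹ := by
      rw [hSS, hTT]; simp
    rw [h1, hT]
    noncomm_ring
  have hEnorm : ‖E‖ ≤ f := spec_le_frob E
  -- bound on ‖T⁻¹‖
  have hTinv : ‖T⁻¹‖ ≤ K / (1 - K * f) := by
    have h2 : T⁻¹ = S⁻¹ + (T⁻¹ - S⁻¹) := by abel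
    have h3 : ‖T⁻¹‖ ≤ K + ‖T⁻¹ * E * S⁻¹‖ := by
      calc ‖T⁻¹‖ = ‖S⁻¹ + (T⁻¹ - S⁻¹)‖ := by rw [← h2]
        _ ≤ ‖S⁻¹‖ + ‖T⁻¹ - S⁻¹‖ := norm_add_le _ _
        _ = K + ‖T⁻¹ * E * S⁻¹‖ := by rw [hiden, norm_neg]
    have h4 : ‖T⁻¹ * E * S⁻¹‖ ≤ ‖T⁻¹‖ * f * K := by
      calc ‖T⁻¹ * E * S⁻¹‖ ≤ ‖T⁻¹ * E‖ * ‖S⁻¹‖ := Matrix.l2_opNorm_mul _ _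
        _ ≤ ‖T⁻¹‖ * ‖E‖ * K := by
            apply mul_le_mul_of_nonneg_right (Matrix.l2_opNorm_mul _ _) hK0
        _ ≤ ‖T⁻¹‖ * f * K :=
            mul_le_mul_of_nonneg_right
              (mul_le_mul_of_nonneg_left hEnorm (norm_nonneg _)) hK0
    have hpos : (0:ℝ) < 1 - K * f := by linarith
    rw [le_div_iff₀ hpos]
    nlinarith [h3, h4]
  -- final bound
  have h5 : frobNorm (T⁻¹ - S⁻¹) ≤ ‖T⁻¹‖ * (f * K) := by
    calc frobNorm (T⁻¹ - S⁻¹) = frobNorm (T⁻¹ * E * S⁻¹) := by rw [hiden, frob_neg]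
      _ ≤ ‖T⁻¹‖ * frobNorm (E * S⁻¹) := by
          rw [Matrix.mul_assoc]; exact frob_mul_left _ _
      _ ≤ ‖T⁻¹‖ * (f * K) := by
          apply mul_le_mul_of_nonneg_left _ (norm_nonneg _)
          exact frob_mul_right E S⁻¹
  have h6 : ‖T⁻¹‖ * (f * K) ≤ (K / (1 - K * f)) * (f * K) :=
    mul_le_mul_of_nonneg_right hTinv (by positivity)
  have h7 : (K / (1 - K * f)) * (f * K) = K ^ 2 * f / (1 - K * f) := by
    field_simp
  linarith [h5, h6, h7 ▸ h6]

end Aux4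

section Aux5
open scoped Matrix.Norms.L2Operator
variable {N : ℕ}

lemma specNorm_inv_pos (hN : N ≠ 0) (S : Matrix (Fin N) (Fin N) ℝ) (hS : IsUnit S.det) :
    0 < specNorm S⁻¹ := by
  rw [specNorm_eq, norm_pos_iff]
  intro h0
  have h1 : S⁻¹ * S = 1 := Matrix.nonsing_inv_mul S hS
  rw [h0, Matrix.zero_mul] at h1
  have i : Fin N := ⟨0, Nat.pos_of_ne_zero hN⟩
  have := congrFun (congrFun h1 i) i
  simp [Matrix.one_apply_eq] at this

lemma det_bound (S E : Matrix (Fin N) (Fin N) ℝ) (hS : IsUnit S.det) {b : ℝ} (hb : 0 < b)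
    (hK : 0 < specNorm S⁻¹)
    (hf : frobNorm E ≤ b / (specNorm S⁻¹ * (specNorm S⁻¹ + b))) :
    frobNorm ((S + E)⁻¹ - S⁻¹) ≤ b := by
  rw [specNorm_eq] at hK hf
  set K := ‖S⁻¹‖ with hKdef
  set f := frobNorm E with hfdef
  have hf0 : 0 ≤ f := frobNorm_nonneg E
  have hKb : 0 < K * (K + b) := by positivity
  rw [le_div_iff₀ hKb] at hf
  have hfd : K * f * (K + b) ≤ b := by nlinarith
  have hlt : K * f < 1 := by nlinarith
  have hbd := key_bound S E hS hlt
  rw [← hKdef, ← hfdef] at hbd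
  have hpos : (0:ℝ) < 1 - K * f := by linarith
  have hstep : K ^ 2 * f / (1 - K * f) ≤ b := by
    rw [div_le_iff₀ hpos]; nlinarith
  linarith

end Aux5


theorem stmt_17 {Ω : Type*} [MeasurableSpace Ω] (μ : Measure Ω) [IsProbabilityMeasure μ]
    {N : ℕ} (S : Matrix (Fin N) (Fin N) ℝ) (hS_symm : S.IsSymm) (hS_inv : IsUnit S.det)
    (Shat : Ω → Matrix (Fin N) (Fin N) ℝ) (C₀ : ℝ) (hC₀ : 0 < C₀) (T : ℕ)
    (htail : ∀ d > (0 : ℝ), ∀ i j,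
      μ {ω | d < |Shat ω i j - S i j|} ≤ ENNReal.ofReal (Real.exp (-C₀ * (T : ℝ) * d ^ 2))) :
    ∀ b > (0 : ℝ),
      μ {ω | b < frobNorm ((Shat ω)⁻¹ - S⁻¹)} ≤
        ENNReal.ofReal ((N : ℝ) ^ 2 * Real.exp (-C₀ * (T : ℝ) * b ^ 2 /
            ((N : ℝ) ^ 2 * specNorm S⁻¹ ^ 2 * (specNorm S⁻¹ + b) ^ 2))) +
        ENNReal.ofReal ((N : ℝ) ^ 2 * Real.exp (-C₀ * (T : ℝ) /
            ((N : ℝ) ^ 2 * specNorm S⁻¹ ^ 2))) := by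
  intro b hb
  by_cases hN : N = 0
  · subst hN
    have hempty : {ω | b < frobNorm ((Shat ω)⁻¹ - S⁻¹)} = ∅ := by
      ext ω
      simp only [Set.mem_setOf_eq, Set.mem_empty_iff_false, iff_false, not_lt]
      have : frobNorm ((Shat ω)⁻¹ - S⁻¹) = 0 := by
        unfold frobNorm; simp
      rw [this]; exact le_of_lt hb
    rw [hempty, measure_empty]
    exact zero_le'
  · set K := specNorm S⁻¹ with hKdef
    have hK : 0 < K := specNorm_inv_pos hN S hS_inv
    set δ : ℝ := b / (K * (K + b)) with hδdef
    have hδ : 0 < δ := by positivity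
    set d : ℝ := δ / N with hddef
    have hNpos : (0:ℝ) < N := by exact_mod_cast Nat.pos_of_ne_zero hN
    have hd : 0 < d := by positivity
    -- inclusion
    have hincl : {ω | b < frobNorm ((Shat ω)⁻¹ - S⁻¹)} ⊆
        ⋃ i : Fin N, ⋃ j : Fin N, {ω | d < |Shat ω i j - S i j|} := by
      intro ω hω
      simp only [Set.mem_setOf_eq] at hω
      by_contra hcon
      simp only [Set.mem_iUnion, Set.mem_setOf_eq, not_exists, not_lt] at hcon
      have hfrob : frobNorm (Shat ω - S) ≤ δ := by
        have := frob_le_entries (Shat ω - S) (le_of_lt hd) (fun i j => by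
          simpa using hcon i j)
        rw [hddef] at this
        calc frobNorm (Shat ω - S) ≤ N * (δ / N) := this
          _ = δ := by field_simp
      have hbound := det_bound S (Shat ω - S) hS_inv hb hK (by rw [← hδdef]; exact hfrob)
      rw [add_sub_cancel] at hbound
      exact absurd hω (not_lt.mpr hbound)
    -- measure computation
    have hexp : -C₀ * (T:ℝ) * d ^ 2 =
        -C₀ * (T:ℝ) * b ^ 2 / ((N:ℝ) ^ 2 * K ^ 2 * (K + b) ^ 2) := by
      have hd2 : d ^ 2 = b ^ 2 / ((N:ℝ) ^ 2 * K ^ 2 * (K + b) ^ 2) := by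
        rw [hddef, hδdef]
        rw [div_pow, div_pow, div_div]
        congr 1
        ring
      rw [hd2]
      ring
    calc μ {ω | b < frobNorm ((Shat ω)⁻¹ - S⁻¹)}
        ≤ μ (⋃ i : Fin N, ⋃ j : Fin N, {ω | d < |Shat ω i j - S i j|}) :=
          measure_mono hincl
      _ ≤ ∑' i : Fin N, μ (⋃ j : Fin N, {ω | d < |Shat ω i j - S i j|}) :=
          measure_iUnion_le _
      _ ≤ ∑' i : Fin N, ∑' j : Fin N, μ {ω | d < |Shat ω i j - S i j|} :=
          ENNReal.tsum_le_tsum (fun i => measure_iUnion_le _)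
      _ ≤ ∑' i : Fin N, ∑' j : Fin N, ENNReal.ofReal (Real.exp (-C₀ * (T:ℝ) * d ^ 2)) :=
          ENNReal.tsum_le_tsum (fun i => ENNReal.tsum_le_tsum (fun j => htail d hd i j))
      _ = (N : ENNReal) * ((N : ENNReal) * ENNReal.ofReal (Real.exp (-C₀ * (T:ℝ) * d ^ 2))) := by
          simp [tsum_fintype, Finset.sum_const, nsmul_eq_mul]
      _ = ENNReal.ofReal ((N : ℝ) ^ 2 * Real.exp (-C₀ * (T:ℝ) * b ^ 2 /
            ((N:ℝ) ^ 2 * K ^ 2 * (K + b) ^ 2))) := by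
          rw [← hexp, ← ENNReal.ofReal_natCast N,
            ← ENNReal.ofReal_mul (by positivity), ← ENNReal.ofReal_mul (by positivity)]
          congr 1
          ring
      _ ≤ _ := le_self_add
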